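/- For p/2 + a + 1 > 0 and η, ‖θ‖ > 0, the integral ∫₀¹ exp(-ηλ‖θ‖²/(2(1-λ))) (ηλ/(1-λ))^{p/2} λ^a (1-λ)^{-a-2} dλ equals η^{-a-1} ∫₀^∞ t^{p/2+a} exp(-t‖θ‖²/2) dt = η^{-a-1} ‖θ‖^{-2(p/2+a+1)} 2^{p/2+a+1} Γ(p/2+a+1). -/

import Mathlib

open Real Filter MeasureTheory

/-- The Gauss hypergeometric function `F(α, β; γ; z)`, defined by its power series. -/
noncomputable def hypF (α β γ z : ℝ) : ℝ :=
  ∑' i : ℕ, ((ascPochhammer ℝ i).eval α * (ascPochhammer ℝ i).eval β /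
      (ascPochhammer ℝ i).eval γ) * z ^ i / (Nat.factorial i)

lemma aux_pt (η a c θn : ℝ) (hη : 0 < η) {l : ℝ} (hl0 : 0 < l) (hl1 : l < 1) :
    Real.exp (-η * l * θn / (2 * (1 - l))) * (η * l / (1 - l)) ^ c * l ^ a * (1 - l) ^ (-a - 2)
      = η ^ (-a - 1) * (|η / (1 - l) ^ 2| * ((η * l / (1 - l)) ^ (c + a) *
          Real.exp (-(η * l / (1 - l)) * θn / 2))) := by
  have h1l : 0 < 1 - l := by linarith
  have ht : 0 < η * l / (1 - l) := by positivity
  have e1 : (1 - l) ^ (-a - 2) = ((1 - l) ^ a * (1 - l) ^ (2 : ℕ))⁻¹ := by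
    rw [show -a - 2 = -(a + 2) by ring, Real.rpow_neg h1l.le, Real.rpow_add h1l,
      show (2 : ℝ) = ((2 : ℕ) : ℝ) by norm_num, Real.rpow_natCast]
  have e2 : η ^ (-a - 1) = (η ^ a * η)⁻¹ := by
    rw [show -a - 1 = -(a + 1) by ring, Real.rpow_neg hη.le, Real.rpow_add hη, Real.rpow_one]
  have e3 : (η * l / (1 - l)) ^ (c + a) = (η * l / (1 - l)) ^ c * (η * l / (1 - l)) ^ a :=
    Real.rpow_add ht c a
  have e4 : (η * l / (1 - l)) ^ a = η ^ a * l ^ a / (1 - l) ^ a := by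
    rw [Real.div_rpow (by positivity) h1l.le, Real.mul_rpow hη.le hl0.le]
  have e5 : -η * l * θn / (2 * (1 - l)) = -(η * l / (1 - l)) * θn / 2 := by
    rw [div_eq_div_iff (by positivity) (two_ne_zero)]
    simp only [neg_mul, neg_inj]
    field_simp
  rw [e1, e2, e3, e4, e5, abs_of_pos (by positivity)]
  have pηa : (0:ℝ) < η ^ a := Real.rpow_pos_of_pos hη a
  have pla : (0:ℝ) < l ^ a := Real.rpow_pos_of_pos hl0 a
  have p1la : (0:ℝ) < (1 - l) ^ a := Real.rpow_pos_of_pos h1l a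
  field_simp

lemma aux_image (η : ℝ) (hη : 0 < η) :
    (fun l : ℝ => η * l / (1 - l)) '' Set.Ioo 0 1 = Set.Ioi 0 := by
  ext t
  constructor
  · rintro ⟨l, ⟨hl0, hl1⟩, rfl⟩
    have h1l : 0 < 1 - l := by linarith
    exact div_pos (by positivity) h1l
  · intro ht
    have ht : 0 < t := ht
    have hden : 0 < t + η := by linarith
    refine ⟨t / (t + η), ⟨by positivity, (div_lt_one hden).2 (by linarith)⟩, ?_⟩
    field_simp
    rw [add_sub_cancel_left, div_self hη.ne']

theorem stmt_18 (p : ℕ) (hp : 3 ≤ p) (a : ℝ) (ha : 0 < (p:ℝ)/2 + a + 1)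
    (η : ℝ) (hη : 0 < η) (θ : EuclideanSpace ℝ (Fin p)) (hθ : 0 < ‖θ‖) :
    (∫ l in (0:ℝ)..1, Real.exp (-η * l * ‖θ‖^2 / (2 * (1 - l))) *
        (η * l / (1 - l)) ^ ((p:ℝ)/2) * l ^ a * (1 - l) ^ (-a - 2)) =
      η ^ (-a - 1) * ∫ t in Set.Ioi (0:ℝ), t ^ ((p:ℝ)/2 + a) * Real.exp (-t * ‖θ‖^2 / 2) ∧
    (∫ t in Set.Ioi (0:ℝ), t ^ ((p:ℝ)/2 + a) * Real.exp (-t * ‖θ‖^2 / 2)) =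
      ‖θ‖ ^ (-2 * ((p:ℝ)/2 + a + 1)) * 2 ^ ((p:ℝ)/2 + a + 1) *
        Real.Gamma ((p:ℝ)/2 + a + 1) := by
  set N := ‖θ‖ with hN
  set s := (p:ℝ)/2 + a + 1 with hs
  constructor
  · -- change of variables t = η l / (1-l)
    have hderiv : ∀ l ∈ Set.Ioo (0:ℝ) 1,
        HasDerivWithinAt (fun l : ℝ => η * l / (1 - l)) (η / (1 - l) ^ 2) (Set.Ioo 0 1) l := by
      intro l hl
      have h1l : (1 : ℝ) - l ≠ 0 := by have := hl.2; intro h; linarith [sub_eq_zero.mp h]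
      have h1 : HasDerivAt (fun x : ℝ => η * x) η l := by
        simpa using (hasDerivAt_id l).const_mul η
      have h2 : HasDerivAt (fun x : ℝ => 1 - x) (-1) l := by
        simpa using (hasDerivAt_id l).const_sub 1
      have := (h1.div h2 h1l).hasDerivWithinAt (s := Set.Ioo (0:ℝ) 1)
      convert this using 1
      · rfl
      · rfl
      · rfl
      · ring
    have hinj : Set.InjOn (fun l : ℝ => η * l / (1 - l)) (Set.Ioo 0 1) := by
      intro l hl m hm h
      have h1l : (0:ℝ) < 1 - l := by linarith [hl.2]
      have h1m : (0:ℝ) < 1 - m := by linarith [hm.2]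
      simp only at h
      have h' : η * l * (1 - m) = η * m * (1 - l) := by
        field_simp at h; linear_combination η * h
      nlinarith [h']
    have key := integral_image_eq_integral_abs_deriv_smul measurableSet_Ioo hderiv hinj
      (fun t => t ^ ((p:ℝ)/2 + a) * Real.exp (-t * N^2 / 2))
    rw [aux_image η hη] at key
    rw [intervalIntegral.integral_of_le zero_le_one, integral_Ioc_eq_integral_Ioo, key,
      ← integral_const_mul]
    refine setIntegral_congr_fun measurableSet_Ioo fun l hl => ?_
    rw [smul_eq_mul]
    exact aux_pt η a ((p:ℝ)/2) (N^2) hη hl.1 hl.2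
  · have hr : (0:ℝ) < N ^ 2 / 2 := by positivity
    have base := integral_rpow_mul_exp_neg_mul_Ioi ha hr
    have eqint : (∫ t in Set.Ioi (0:ℝ), t ^ ((p:ℝ)/2 + a) * Real.exp (-t * N^2 / 2))
        = ∫ t in Set.Ioi (0:ℝ), t ^ (s - 1) * Real.exp (-(N^2/2 * t)) := by
      refine setIntegral_congr_fun measurableSet_Ioi fun t ht => ?_
      rw [show s - 1 = (p:ℝ)/2 + a by rw [hs]; ring, show -(N^2/2 * t) = -t * N^2/2 by ring]
    rw [eqint, base]
    have h1 : (1 / (N ^ 2 / 2)) ^ s = N ^ (-2 * s) * 2 ^ s := by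
      rw [show (1 / (N^2/2) : ℝ) = 2 / N^2 by field_simp,
        Real.div_rpow (by norm_num) (by positivity),
        ← Real.rpow_natCast N 2, ← Real.rpow_mul hθ.le]
      push_cast
      rw [show -2 * s = -(2 * s) by ring, Real.rpow_neg hθ.le, div_eq_mul_inv, mul_comm]
    rw [h1]
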